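/- For any sign vector (ε₁,…,εₙ) ∈ {1,−1}ⁿ and any element x of the real Cayley–Dickson algebra 𝔸ₙ, there exist r, s ∈ ℝ such that x·x = r·1 + s·x; consequently (x·x)·x = x·(x·x) for every x ∈ 𝔸ₙ. -/
import Mathlib


noncomputable section

/-- The real Cayley–Dickson algebra carrier: `CD 0 = ℝ`, `CD (n+1) = CD n × CD n`. -/
def CD : ℕ → Type
  | 0 => ℝ
  | n + 1 => CD n × CD n

instance CD.instAddCommGroup : (n : ℕ) → AddCommGroup (CD n)
  | 0 => inferInstanceAs (AddCommGroup ℝ)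
  | n + 1 =>
    letI := CD.instAddCommGroup n
    inferInstanceAs (AddCommGroup (CD n × CD n))

instance CD.instModule : (n : ℕ) → Module ℝ (CD n)
  | 0 => inferInstanceAs (Module ℝ ℝ)
  | n + 1 =>
    letI := CD.instModule n
    inferInstanceAs (Module ℝ (CD n × CD n))

/-- The unit of the Cayley–Dickson algebra. -/
def CD.one : (n : ℕ) → CD n
  | 0 => (1 : ℝ)
  | n + 1 => (CD.one n, 0)

/-- Conjugation: `(a, b)* = (a*, -b)`, identity on `ℝ`. -/
def CD.conj : (n : ℕ) → CD n → CD n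
  | 0, a => a
  | n + 1, x => (CD.conj n x.1, -x.2)

/-- Cayley–Dickson multiplication with sign vector `ε`:
`(a,b)·(c,d) = (a·c − ε (n+1) • (d*·b), d·a + b·c*)`. -/
def CD.mul (ε : ℕ → ℝ) : (n : ℕ) → CD n → CD n → CD n
  | 0, a, c => (show ℝ from a) * (show ℝ from c)
  | n + 1, x, y =>
    (CD.mul ε n x.1 y.1 - ε (n + 1) • CD.mul ε n (CD.conj n y.2) x.2,
     CD.mul ε n y.2 x.1 + CD.mul ε n x.2 (CD.conj n y.1))

/-- The standard basis element `e α` of `CD n`, for `α ⊆ {1,…,n}`. -/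
def CD.basis : (n : ℕ) → Finset ℕ → CD n
  | 0, _ => (1 : ℝ)
  | n + 1, α =>
    if n + 1 ∈ α then ((0 : CD n), CD.basis n (α.erase (n + 1)))
    else (CD.basis n α, (0 : CD n))

/-- `α` indexes a pure basis element of `CD n`. -/
def CD.IsPure (n : ℕ) (α : Finset ℕ) : Prop :=
  α.Nonempty ∧ α ⊆ Finset.Icc 1 n

/-- The associator `[x,y,z] = (x·y)·z − x·(y·z)`. -/
def CD.assoc (ε : ℕ → ℝ) (n : ℕ) (x y z : CD n) : CD n :=
  CD.mul ε n (CD.mul ε n x y) z - CD.mul ε n x (CD.mul ε n y z)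

/-- A triad: indices of three pairwise distinct pure basis elements `b, c, d`
with `d ≠ ±(b·c)` (all signs `εᵢ = 1`). -/
def CD.IsTriad (n : ℕ) (α β γ : Finset ℕ) : Prop :=
  CD.IsPure n α ∧ CD.IsPure n β ∧ CD.IsPure n γ ∧
  α ≠ β ∧ α ≠ γ ∧ β ≠ γ ∧
  CD.basis n γ ≠ CD.mul (fun _ => 1) n (CD.basis n α) (CD.basis n β) ∧
  CD.basis n γ ≠ -CD.mul (fun _ => 1) n (CD.basis n α) (CD.basis n β)

/-- Multiplication with all signs `εᵢ = 1`. -/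
abbrev CD.mul1 (n : ℕ) : CD n → CD n → CD n := CD.mul (fun _ => 1) n

/-- Associator with all signs `εᵢ = 1`. -/
abbrev CD.assoc1 (n : ℕ) : CD n → CD n → CD n → CD n := CD.assoc (fun _ => 1) n

namespace CD
variable (ε : ℕ → ℝ)

theorem conj_zero : ∀ n, conj n (0 : CD n) = 0
  | 0 => rfl
  | n + 1 => by
    show ((conj n 0, -(0 : CD n)) : CD n × CD n) = ((0 : CD n), (0 : CD n))
    rw [conj_zero n, neg_zero]

theorem conj_add : ∀ n, ∀ x y : CD n, conj n (x + y) = conj n x + conj n y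
  | 0, x, y => rfl
  | n + 1, x, y => by
    show ((conj n (x.1 + y.1), -(x.2 + y.2)) : CD n × CD n)
        = (conj n x.1 + conj n y.1, -x.2 + -y.2)
    rw [conj_add n, neg_add]

theorem conj_neg : ∀ n, ∀ x : CD n, conj n (-x) = -conj n x
  | 0, x => rfl
  | n + 1, x => by
    show ((conj n (-x.1), -(-x.2)) : CD n × CD n) = (-conj n x.1, -(-x.2))
    rw [conj_neg n]

theorem conj_smul : ∀ n, ∀ (r : ℝ) (x : CD n), conj n (r • x) = r • conj n x
  | 0, r, x => rfl
  | n + 1, r, x => by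
    show ((conj n (r • x.1), -(r • x.2)) : CD n × CD n) = (r • conj n x.1, r • -x.2)
    rw [conj_smul n, smul_neg]

theorem conj_conj : ∀ n, ∀ x : CD n, conj n (conj n x) = x
  | 0, x => rfl
  | n + 1, x => by
    show ((conj n (conj n x.1), -(-x.2)) : CD n × CD n) = (x.1, x.2)
    rw [conj_conj n, neg_neg]

theorem conj_one : ∀ n, conj n (one n) = one n
  | 0 => rfl
  | n + 1 => by
    show ((conj n (one n), -(0 : CD n)) : CD n × CD n) = (one n, 0)
    rw [conj_one n, neg_zero]

theorem zmul_mulz :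
    ∀ n, (∀ x : CD n, mul ε n 0 x = 0) ∧ (∀ x : CD n, mul ε n x 0 = 0)
  | 0 => ⟨fun x => zero_mul (show ℝ from x), fun x => mul_zero (show ℝ from x)⟩
  | n + 1 => by
    obtain ⟨hz, hz'⟩ := zmul_mulz n
    constructor
    · intro x
      show ((mul ε n 0 x.1 - ε (n+1) • mul ε n (conj n x.2) 0,
          mul ε n x.2 0 + mul ε n 0 (conj n x.1)) : CD n × CD n) = ((0 : CD n), 0)
      rw [hz, hz', hz, hz', smul_zero, sub_zero, add_zero]
    · intro x
      show ((mul ε n x.1 0 - ε (n+1) • mul ε n (conj n 0) x.2,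
          mul ε n 0 x.1 + mul ε n x.2 (conj n 0)) : CD n × CD n) = ((0 : CD n), 0)
      rw [conj_zero, hz, hz', hz, hz', smul_zero, sub_zero, add_zero]

theorem addmul_muladd :
    ∀ n, (∀ x y z : CD n, mul ε n (x + y) z = mul ε n x z + mul ε n y z)
       ∧ (∀ x y z : CD n, mul ε n x (y + z) = mul ε n x y + mul ε n x z)
  | 0 => ⟨fun x y z => add_mul (show ℝ from x) y z,
          fun x y z => mul_add (show ℝ from x) y z⟩
  | n + 1 => by
    obtain ⟨ha, ha'⟩ := addmul_muladd n
    constructor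
    · intro x y z
      show ((mul ε n (x.1 + y.1) z.1 - ε (n+1) • mul ε n (conj n z.2) (x.2 + y.2),
          mul ε n z.2 (x.1 + y.1) + mul ε n (x.2 + y.2) (conj n z.1)) : CD n × CD n)
        = ((mul ε n x.1 z.1 - ε (n+1) • mul ε n (conj n z.2) x.2)
            + (mul ε n y.1 z.1 - ε (n+1) • mul ε n (conj n z.2) y.2),
           (mul ε n z.2 x.1 + mul ε n x.2 (conj n z.1))
            + (mul ε n z.2 y.1 + mul ε n y.2 (conj n z.1)))
      rw [ha, ha', ha', ha, Prod.mk.injEq]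
      exact ⟨by rw [smul_add]; abel, by abel⟩
    · intro x y z
      show ((mul ε n x.1 (y.1 + z.1) - ε (n+1) • mul ε n (conj n (y.2 + z.2)) x.2,
          mul ε n (y.2 + z.2) x.1 + mul ε n x.2 (conj n (y.1 + z.1))) : CD n × CD n)
        = ((mul ε n x.1 y.1 - ε (n+1) • mul ε n (conj n y.2) x.2)
            + (mul ε n x.1 z.1 - ε (n+1) • mul ε n (conj n z.2) x.2),
           (mul ε n y.2 x.1 + mul ε n x.2 (conj n y.1))
            + (mul ε n z.2 x.1 + mul ε n x.2 (conj n z.1)))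
      rw [conj_add, conj_add, ha', ha, ha, ha', Prod.mk.injEq]
      exact ⟨by rw [smul_add]; abel, by abel⟩

theorem smulmul_mulsmul :
    ∀ n, (∀ (r : ℝ) (x y : CD n), mul ε n (r • x) y = r • mul ε n x y)
       ∧ (∀ (r : ℝ) (x y : CD n), mul ε n x (r • y) = r • mul ε n x y)
  | 0 => ⟨fun r x y => smul_mul_assoc r (show ℝ from x) y,
          fun r x y => mul_smul_comm r (show ℝ from x) y⟩
  | n + 1 => by
    obtain ⟨hs, hs'⟩ := smulmul_mulsmul n
    constructor
    · intro r x y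
      show ((mul ε n (r • x.1) y.1 - ε (n+1) • mul ε n (conj n y.2) (r • x.2),
          mul ε n y.2 (r • x.1) + mul ε n (r • x.2) (conj n y.1)) : CD n × CD n)
        = (r • (mul ε n x.1 y.1 - ε (n+1) • mul ε n (conj n y.2) x.2),
           r • (mul ε n y.2 x.1 + mul ε n x.2 (conj n y.1)))
      rw [hs, hs', hs, hs', Prod.mk.injEq, smul_sub, smul_add, smul_comm r (ε (n+1))]
      exact ⟨rfl, rfl⟩
    · intro r x y
      show ((mul ε n x.1 (r • y.1) - ε (n+1) • mul ε n (conj n (r • y.2)) x.2,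
          mul ε n (r • y.2) x.1 + mul ε n x.2 (conj n (r • y.1))) : CD n × CD n)
        = (r • (mul ε n x.1 y.1 - ε (n+1) • mul ε n (conj n y.2) x.2),
           r • (mul ε n y.2 x.1 + mul ε n x.2 (conj n y.1)))
      rw [conj_smul, conj_smul, hs', hs, hs, hs', Prod.mk.injEq, smul_sub, smul_add,
        smul_comm r (ε (n+1))]
      exact ⟨rfl, rfl⟩

theorem onemul_mulone :
    ∀ n, (∀ x : CD n, mul ε n (one n) x = x) ∧ (∀ x : CD n, mul ε n x (one n) = x)
  | 0 => ⟨fun x => one_mul (show ℝ from x), fun x => mul_one (show ℝ from x)⟩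
  | n + 1 => by
    obtain ⟨h1, h1'⟩ := onemul_mulone n
    constructor
    · intro x
      show ((mul ε n (one n) x.1 - ε (n+1) • mul ε n (conj n x.2) 0,
          mul ε n x.2 (one n) + mul ε n 0 (conj n x.1)) : CD n × CD n) = (x.1, x.2)
      rw [h1, h1', (zmul_mulz ε n).2, (zmul_mulz ε n).1, smul_zero, sub_zero, add_zero]
    · intro x
      show ((mul ε n x.1 (one n) - ε (n+1) • mul ε n (conj n 0) x.2,
          mul ε n 0 x.1 + mul ε n x.2 (conj n (one n))) : CD n × CD n) = (x.1, x.2)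
      rw [conj_zero, conj_one, h1', h1', (zmul_mulz ε n).1, (zmul_mulz ε n).1, smul_zero,
        sub_zero, zero_add]

theorem mulneg (n : ℕ) (x y : CD n) : mul ε n x (-y) = -mul ε n x y := by
  rw [← neg_one_smul ℝ y, (smulmul_mulsmul ε n).2, neg_one_smul]

theorem mulsub (n : ℕ) (x y z : CD n) : mul ε n x (y - z) = mul ε n x y - mul ε n x z := by
  rw [sub_eq_add_neg, (addmul_muladd ε n).2, mulneg, sub_eq_add_neg]

theorem trace : ∀ n, ∀ x : CD n, ∃ t : ℝ, x + conj n x = t • one n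
  | 0, x => ⟨2 * (show ℝ from x), by
      show (show ℝ from x) + (show ℝ from x) = (2 * (show ℝ from x)) • (1:ℝ)
      rw [smul_eq_mul, mul_one]; ring⟩
  | n + 1, x => by
    obtain ⟨t, ht⟩ := trace n x.1
    refine ⟨t, ?_⟩
    show ((x.1 + conj n x.1, x.2 + -x.2) : CD n × CD n) = (t • one n, t • (0 : CD n))
    rw [ht, add_neg_cancel, smul_zero]

theorem norm : ∀ n, ∀ x : CD n, ∃ q : ℝ,
    mul ε n x (conj n x) = q • one n ∧ mul ε n (conj n x) x = q • one n
  | 0, x => ⟨(show ℝ from x) * (show ℝ from x), by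
      constructor <;>
        · show (show ℝ from x) * (show ℝ from x)
              = ((show ℝ from x) * (show ℝ from x)) • (1:ℝ)
          rw [smul_eq_mul, mul_one]⟩
  | n + 1, x => by
    obtain ⟨qa, ha, ha'⟩ := norm n x.1
    obtain ⟨qb, hb, hb'⟩ := norm n x.2
    refine ⟨qa + ε (n + 1) * qb, ?_, ?_⟩
    · show ((mul ε n x.1 (conj n x.1) - ε (n+1) • mul ε n (conj n (-x.2)) x.2,
          mul ε n (-x.2) x.1 + mul ε n x.2 (conj n (conj n x.1))) : CD n × CD n)
        = ((qa + ε (n+1) * qb) • one n, (qa + ε (n+1) * qb) • (0 : CD n))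
      rw [conj_neg, conj_conj, ← neg_one_smul ℝ (conj n x.2),
        (smulmul_mulsmul ε n).1, ← neg_one_smul ℝ x.2, (smulmul_mulsmul ε n).1,
        ha, hb', Prod.mk.injEq]
      exact ⟨by module, by module⟩
    · show ((mul ε n (conj n x.1) x.1 - ε (n+1) • mul ε n (conj n x.2) (-x.2),
          mul ε n x.2 (conj n x.1) + mul ε n (-x.2) (conj n x.1)) : CD n × CD n)
        = ((qa + ε (n+1) * qb) • one n, (qa + ε (n+1) * qb) • (0 : CD n))
      rw [mulneg, hb', ha', ← neg_one_smul ℝ x.2, (smulmul_mulsmul ε n).1, Prod.mk.injEq]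
      exact ⟨by module, by module⟩

theorem quadratic (n : ℕ) (x : CD n) : ∃ r s : ℝ, mul ε n x x = r • one n + s • x := by
  obtain ⟨t, ht⟩ := trace n x
  obtain ⟨q, hq, -⟩ := norm ε n x
  refine ⟨-q, t, ?_⟩
  have hx : x = t • one n - conj n x := by rw [← ht]; abel
  calc mul ε n x x = mul ε n x (t • one n - conj n x) := by rw [← hx]
    _ = t • mul ε n x (one n) - mul ε n x (conj n x) := by
        rw [mulsub, (smulmul_mulsmul ε n).2]
    _ = (-q) • one n + t • x := by
        rw [(onemul_mulone ε n).2, hq, neg_smul]; abel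

end CD

/-- For any sign vector, every `x ∈ 𝔸ₙ` satisfies
`x·x = r·1 + s·x` for some reals `r, s`; consequently `(x·x)·x = x·(x·x)`. -/
theorem stmt15 (n : ℕ) (ε : ℕ → ℝ) (hε : ∀ i, ε i = 1 ∨ ε i = -1) :
    (∀ x : CD n, ∃ r s : ℝ, CD.mul ε n x x = r • CD.one n + s • x) ∧
    (∀ x : CD n, CD.mul ε n (CD.mul ε n x x) x
        = CD.mul ε n x (CD.mul ε n x x)) := by
  refine ⟨CD.quadratic ε n, fun x => ?_⟩
  obtain ⟨r, s, h⟩ := CD.quadratic ε n x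
  rw [h, (CD.addmul_muladd ε n).1, (CD.addmul_muladd ε n).2,
    (CD.smulmul_mulsmul ε n).1, (CD.smulmul_mulsmul ε n).1,
    (CD.smulmul_mulsmul ε n).2, (CD.smulmul_mulsmul ε n).2,
    (CD.onemul_mulone ε n).1, (CD.onemul_mulone ε n).2]
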